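/- Let M be a topological space, E a real topological vector space, ψ : M → E a continuous map admitting a local cone structure C, and suppose every fiber of ψ is preconnected. Then for every open subset U ⊆ M, the saturation ψ⁻¹(ψ(U)) is open in M. -/

import Mathlib

open Topology

/-- A local cone structure for a continuous map `ψ : M → E`: an assignment of a
closed subset `C x ⊆ E` to each `x ∈ M` such that (S1) every neighborhood of `x`
contains an open neighborhood `U` of `x` with `ψ '' U ⊆ C x` and `ψ '' U` a
neighborhood of `ψ x` in `C x` (subspace topology), and (S2) `C` is constant on
connected components of fibers of `ψ`. -/
structure IsLocalConeStructure {M E : Type*} [TopologicalSpace M] [TopologicalSpace E]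
    (ψ : M → E) (C : M → Set E) : Prop where
  isClosed : ∀ x : M, IsClosed (C x)
  locally : ∀ x : M, ∀ V ∈ 𝓝 x, ∃ U : Set M, IsOpen U ∧ x ∈ U ∧ U ⊆ V ∧
      ψ '' U ⊆ C x ∧ ψ '' U ∈ 𝓝[C x] (ψ x)
  fiberCompat : ∀ x y : M, y ∈ connectedComponentIn (ψ ⁻¹' {ψ x}) x → C x = C y

/-- If `ψ : M → E` is continuous, admits a local cone structure, and
has preconnected fibers, then the saturation `ψ⁻¹(ψ(U))` of every open set `U` is
open. -/
theorem stmt10 {M E : Type*} [TopologicalSpace M]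
    [AddCommGroup E] [Module ℝ E] [TopologicalSpace E]
    [IsTopologicalAddGroup E] [ContinuousSMul ℝ E]
    (ψ : M → E) (C : M → Set E)
    (hcont : Continuous ψ) (hC : IsLocalConeStructure ψ C)
    (hfib : ∀ u : E, IsPreconnected (ψ ⁻¹' {u})) :
    ∀ U : Set M, IsOpen U → IsOpen (ψ ⁻¹' (ψ '' U)) := by
  intro U hU
  rw [isOpen_iff_forall_mem_open]
  rintro y ⟨x, hxU, hxy⟩
  -- `C x = C y` since they lie in the same (preconnected) fiber
  have hyfib : y ∈ ψ ⁻¹' {ψ x} := by simp [hxy]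
  have hxfib : x ∈ ψ ⁻¹' {ψ x} := by simp
  have hCeq : C x = C y :=
    hC.fiberCompat x y
      ((hfib (ψ x)).subset_connectedComponentIn hxfib subset_rfl hyfib)
  -- S1 at x within U
  obtain ⟨U', hU'open, hxU', hU'sub, hU'C, hU'nhd⟩ :=
    hC.locally x U (hU.mem_nhds hxU)
  rw [mem_nhdsWithin] at hU'nhd
  obtain ⟨O, hOopen, hxO, hOsub⟩ := hU'nhd
  -- S1 at y (any neighborhood)
  obtain ⟨W, hWopen, hyW, -, hWC, -⟩ := hC.locally y Set.univ Filter.univ_mem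
  refine ⟨W ∩ ψ ⁻¹' O, ?_, (hWopen.inter (hOopen.preimage hcont)), ⟨hyW, ?_⟩⟩
  · rintro w ⟨hwW, hwO⟩
    have : ψ w ∈ O ∩ C x := ⟨hwO, hCeq ▸ hWC ⟨w, hwW, rfl⟩⟩
    obtain ⟨u, huU', hu⟩ := hOsub this
    exact ⟨u, hU'sub huU', hu⟩
  · show ψ y ∈ O
    rw [← hxy]; exact hxO
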